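/- If Γ and Γ' are strongly connected, deterministic, complete A-graphs such that there exist graph morphisms Γ → Γ' and Γ' → Γ, then Γ and Γ' are isomorphic. -/
import Mathlib

/-- A morphism from a complete graph into a deterministic, strongly connected
graph is surjective. -/
theorem aGraph_morphism_surjective {A Q Q' : Type*} [Nonempty Q]
    (E : Q → A → Q → Prop) (E' : Q' → A → Q' → Prop)
    (hdet' : ∀ p a q r, E' p a q → E' p a r → q = r)
    (hcomp : ∀ p a, ∃ q, E p a q)
    (hsc' : ∀ p q : Q', Relation.ReflTransGen (fun x y => ∃ a, E' x a y) p q)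
    (φ : Q → Q') (hφ : ∀ p a q, E p a q → E' (φ p) a (φ q)) :
    Function.Surjective φ := by
  intro q'
  obtain ⟨p⟩ := ‹Nonempty Q›
  have h := hsc' (φ p) q'
  induction h with
  | refl => exact ⟨p, rfl⟩
  | tail _ hedge ih =>
    obtain ⟨u, rfl⟩ := ih
    obtain ⟨a, ha⟩ := hedge
    obtain ⟨v, hv⟩ := hcomp u a
    exact ⟨v, hdet' _ _ _ _ (hφ _ _ _ hv) ha⟩

/-- if `Γ` and `Γ'` are strongly connected, deterministic, complete
`A`-graphs such that there exist graph morphisms `Γ → Γ'` and `Γ' → Γ`, then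
`Γ` and `Γ'` are isomorphic. -/
theorem aGraph_iso_of_mutual_morphisms {A Q Q' : Type*}
    [Fintype Q] [Nonempty Q] [Fintype Q'] [Nonempty Q']
    (E : Q → A → Q → Prop) (E' : Q' → A → Q' → Prop)
    (hdet : ∀ p a q r, E p a q → E p a r → q = r)
    (hdet' : ∀ p a q r, E' p a q → E' p a r → q = r)
    (hcomp : ∀ p a, ∃ q, E p a q)
    (hcomp' : ∀ p a, ∃ q, E' p a q)
    (hsc : ∀ p q : Q, Relation.ReflTransGen (fun x y => ∃ a, E x a y) p q)
    (hsc' : ∀ p q : Q', Relation.ReflTransGen (fun x y => ∃ a, E' x a y) p q)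
    (φ : Q → Q') (hφ : ∀ p a q, E p a q → E' (φ p) a (φ q))
    (ψ : Q' → Q) (hψ : ∀ p a q, E' p a q → E (ψ p) a (ψ q)) :
    ∃ θ : Q ≃ Q', (∀ p a q, E p a q → E' (θ p) a (θ q)) ∧
      (∀ p a q, E' p a q → E (θ.symm p) a (θ.symm q)) := by
  have hsurj : Function.Surjective φ :=
    aGraph_morphism_surjective E E' hdet' hcomp hsc' φ hφ
  have hsurj' : Function.Surjective ψ :=
    aGraph_morphism_surjective E' E hdet hcomp' hsc ψ hψ
  have hcard : Fintype.card Q = Fintype.card Q' :=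
    le_antisymm (Fintype.card_le_of_surjective ψ hsurj')
      (Fintype.card_le_of_surjective φ hsurj)
  have hbij : Function.Bijective φ :=
    (Fintype.bijective_iff_surjective_and_card φ).2 ⟨hsurj, hcard⟩
  refine ⟨Equiv.ofBijective φ hbij, fun p a q h => hφ p a q h, ?_⟩
  intro p a q h
  set θ := Equiv.ofBijective φ hbij
  obtain ⟨v, hv⟩ := hcomp (θ.symm p) a
  have h1 : E' p a (φ v) := by
    have := hφ _ _ _ hv
    rwa [show φ (θ.symm p) = p from θ.apply_symm_apply p] at this
  have : φ v = q := hdet' _ _ _ _ h1 h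
  have : θ.symm q = v := by
    rw [← this]; exact θ.symm_apply_apply v
  rwa [this]
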